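/- The complete graph K_{2k+1} on 2k+1 vertices can be decomposed into k edge-disjoint Hamiltonian cycles. -/

import Mathlib

namespace HamDecomp
open SimpleGraph

/-! ### A generic walk constructor along a vertex enumeration -/

variable {V : Type*}

def mkWalk (G : SimpleGraph V) (f : ℕ → V) (m : ℕ)
    (h : ∀ j, j < m → G.Adj (f j) (f (j+1))) :
    ∀ n, n ≤ m → G.Walk (f (m - n)) (f m)
  | 0, _ => Walk.nil
  | n+1, hn =>
      Walk.cons (h (m - (n+1)) (by omega))
        ((mkWalk G f m h n (by omega)).copy (congrArg f (by omega)) rfl)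

lemma mkWalk_support (G : SimpleGraph V) (f : ℕ → V) (m : ℕ)
    (h : ∀ j, j < m → G.Adj (f j) (f (j+1))) :
    ∀ n (hn : n ≤ m), (mkWalk G f m h n hn).support = (List.range' (m-n) (n+1)).map f
  | 0, _ => by simp [mkWalk]
  | n+1, hn => by
      rw [mkWalk]
      rw [Walk.support_cons, Walk.support_copy, mkWalk_support G f m h n (by omega)]
      conv_rhs => rw [List.range'_succ]
      rw [show m - (n+1) + 1 = m - n by omega]
      simp

lemma mkWalk_edges (G : SimpleGraph V) (f : ℕ → V) (m : ℕ)
    (h : ∀ j, j < m → G.Adj (f j) (f (j+1))) :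
    ∀ n (hn : n ≤ m),
      (mkWalk G f m h n hn).edges = (List.range' (m-n) n).map (fun j => s(f j, f (j+1)))
  | 0, _ => by simp [mkWalk]
  | n+1, hn => by
      rw [mkWalk]
      rw [Walk.edges_cons, Walk.edges_copy, mkWalk_edges G f m h n (by omega)]
      conv_rhs => rw [List.range'_succ]
      rw [show m - (n+1) + 1 = m - n by omega]
      simp
      exact Or.inl (congrArg f (by omega))

/-! ### The Walecki construction -/

/-- zigzag enumeration of `{0,...,2k-1}`: positions `1..2k` map to
`0, 1, 2k-1, 2, 2k-2, ..., k+1, k`. -/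
def zig (k j : ℕ) : ℕ := if j = 1 then 0 else if j % 2 = 0 then j / 2 else 2*k - j/2

/-- The `j`-th vertex (as a natural number) of the `i`-th Hamiltonian cycle;
the vertex `2k` plays the role of `∞`, the remaining vertices are rotated by `i`. -/
def fN (k i j : ℕ) : ℕ :=
  if j = 0 then 2*k
  else if j = 2*k+1 then 2*k
  else if zig k j + i < 2*k then zig k j + i else zig k j + i - 2*k

def fv (k i : ℕ) (j : ℕ) : Fin (2*k+1) := ⟨min (fN k i j) (2*k), by omega⟩

set_option maxHeartbeats 1600000 in
lemma fN_le (k i j : ℕ) (hi : i < k) (hj : j ≤ 2*k+1) : fN k i j ≤ 2*k := by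
  unfold fN zig; split_ifs <;> first | exact False.elim (by assumption) | omega

lemma fv_val (k i j : ℕ) (hi : i < k) (hj : j ≤ 2*k+1) : (fv k i j).val = fN k i j := by
  have := fN_le k i j hi hj; simp [fv]; omega

lemma fN_lt (k i j : ℕ) (hi : i < k) (hj1 : 1 ≤ j) (hj2 : j ≤ 2*k) : fN k i j < 2*k := by
  unfold fN zig; split_ifs <;> first | exact False.elim (by assumption) | omega

/-- adjacency in the `i`-th cycle graph: `∞ = 2k` is joined to `i` and `i+k`,
and `a, b < 2k` are joined iff `a + b ≡ 2i` or `2i+1 (mod 2k)`. -/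
def A (k i : ℕ) (a b : Fin (2*k+1)) : Prop :=
  (a.val = 2*k ∧ (b.val = i ∨ b.val = i + k)) ∨
  (b.val = 2*k ∧ (a.val = i ∨ a.val = i + k)) ∨
  (a.val < 2*k ∧ b.val < 2*k ∧ a.val ≠ b.val ∧
    (a.val+b.val = 2*i ∨ a.val+b.val = 2*i+1 ∨
     a.val+b.val = 2*k+2*i ∨ a.val+b.val = 2*k+2*i+1))

def Cg (k i : ℕ) (hi : i < k) : SimpleGraph (Fin (2*k+1)) where
  Adj := A k i
  symm := by constructor; intro a b h; unfold A at h ⊢; omega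
  loopless := by constructor; intro a h; unfold A at h; omega

set_option maxHeartbeats 1600000 in
lemma f_inj (k i : ℕ) (hi : i < k) {j l : ℕ} (hj1 : 1 ≤ j) (hj2 : j ≤ 2*k+1)
    (hl1 : 1 ≤ l) (hl2 : l ≤ 2*k+1) (h : fv k i j = fv k i l) : j = l := by
  have h' := congrArg Fin.val h
  rw [fv_val k i j hi hj2, fv_val k i l hi hl2] at h'
  unfold fN zig at h'; split_ifs at h' <;> first | exact False.elim (by assumption) | omega

set_option maxHeartbeats 1600000 in
lemma f_adj (k i : ℕ) (hi : i < k) {j : ℕ} (hj : j < 2*k+1) :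
    (Cg k i hi).Adj (fv k i j) (fv k i (j+1)) := by
  show A k i _ _
  unfold A
  rw [fv_val k i j hi (by omega), fv_val k i (j+1) hi (by omega)]
  unfold fN zig
  split_ifs <;> first | exact False.elim (by assumption) | omega

set_option maxHeartbeats 1600000 in
lemma f_surj (k i : ℕ) (hk : 1 ≤ k) (hi : i < k) (a : Fin (2*k+1)) :
    ∃ j, 1 ≤ j ∧ j ≤ 2*k+1 ∧ fv k i j = a := by
  have ha := a.isLt
  have key : ∀ j, 1 ≤ j → j ≤ 2*k+1 → fN k i j = a.val → fv k i j = a := by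
    intro j h1 h2 h3
    exact Fin.ext (by rw [fv_val k i j hi h2]; exact h3)
  by_cases hv : a.val = 2*k
  · exact ⟨2*k+1, by omega, by omega, key _ (by omega) (by omega)
      (by unfold fN; split_ifs <;> first | exact False.elim (by assumption) | omega)⟩
  by_cases h1 : i ≤ a.val
  · by_cases h2 : a.val = i
    · exact ⟨1, by omega, by omega, key _ (by omega) (by omega)
        (by unfold fN zig; split_ifs <;> first | exact False.elim (by assumption) | omega)⟩
    obtain ⟨c, hc⟩ : ∃ c, a.val = i + c := ⟨a.val - i, by omega⟩
    by_cases h3 : c ≤ k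
    · exact ⟨2*c, by omega, by omega, key _ (by omega) (by omega)
        (by unfold fN zig; split_ifs <;> first | exact False.elim (by assumption) | omega)⟩
    · obtain ⟨d, hd⟩ : ∃ d, c + d = 2*k := ⟨2*k - c, by omega⟩
      exact ⟨2*d + 1, by omega, by omega, key _ (by omega) (by omega)
        (by unfold fN zig; split_ifs <;> first | exact False.elim (by assumption) | omega)⟩
  · -- a.val < i ; the un-rotated value is a.val + 2k - i > k
    obtain ⟨c, hc⟩ : ∃ c, i = a.val + c := ⟨i - a.val, by omega⟩
    exact ⟨2*c + 1, by omega, by omega, key _ (by omega) (by omega)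
      (by unfold fN zig; split_ifs <;> first | exact False.elim (by assumption) | omega)⟩

lemma hamCycle (k : ℕ) (hk : 1 ≤ k) (i : ℕ) (hi : i < k) :
    ∃ (v : Fin (2*k+1)) (w : (Cg k i hi).Walk v v), w.IsHamiltonianCycle := by
  set G := Cg k i hi with hG
  set f := fv k i with hf
  have hadj : ∀ j, j < 2*k+1 → G.Adj (f j) (f (j+1)) := fun j hj => f_adj k i hi hj
  have h1 : f (2*k+1 - 2*k) = f 1 := congrArg f (by omega)
  have h0 : f (2*k+1) = f 0 := by
    apply Fin.ext
    rw [hf, fv_val k i _ hi (by omega), fv_val k i 0 hi (by omega)]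
    unfold fN; split_ifs <;> first | exact False.elim (by assumption) | omega
  set P : G.Walk (f 1) (f 0) :=
    (mkWalk G f (2*k+1) hadj (2*k) (by omega)).copy h1 h0 with hP
  have hsupp : P.support = (List.range' 1 (2*k+1)).map f := by
    rw [hP, Walk.support_copy, mkWalk_support, show 2*k+1 - 2*k = 1 by omega]
  have hedges : P.edges = (List.range' 1 (2*k)).map (fun j => s(f j, f (j+1))) := by
    rw [hP, Walk.edges_copy, mkWalk_edges, show 2*k+1 - 2*k = 1 by omega]
  have hnodup : P.support.Nodup := by
    rw [hsupp]
    refine List.Nodup.map_on ?_ (List.nodup_range' (s := 1) (n := 2*k+1))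
    intro x hx y hy hxy
    rw [List.mem_range'_1] at hx hy
    exact f_inj k i hi (by omega) (by omega) (by omega) (by omega) hxy
  have hne : ¬ s(f 0, f 1) ∈ P.edges := by
    rw [hedges]
    intro hmem
    obtain ⟨j, hjmem, hje⟩ := List.mem_map.mp hmem
    rw [List.mem_range'_1] at hjmem
    have h0v : fN k i 0 = 2*k := by unfold fN; split_ifs <;> first | exact False.elim (by assumption) | omega
    have hval : ∀ l, 1 ≤ l → l ≤ 2*k → (f l).val ≠ (f 0).val := by
      intro l hl1 hl2
      rw [hf, fv_val k i l hi (by omega), fv_val k i 0 hi (by omega), h0v]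
      have := fN_lt k i l hi hl1 hl2
      omega
    rcases Sym2.eq_iff.mp hje with ⟨e1, e2⟩ | ⟨e1, e2⟩
    · exact hval j (by omega) (by omega) (congrArg Fin.val e1)
    · by_cases hj : j + 1 ≤ 2*k
      · exact hval (j+1) (by omega) hj (congrArg Fin.val e2)
      · have hj2k : j = 2*k := by omega
        have : j = 1 := f_inj k i hi (by omega) (by omega) (by omega) (by omega) e1
        omega
  set w : G.Walk (f 0) (f 0) := Walk.cons (hadj 0 (by omega)) P with hw
  refine ⟨f 0, w, ?_⟩
  rw [Walk.isHamiltonianCycle_iff_isCycle_and_support_count_tail_eq_one]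
  constructor
  · exact (SimpleGraph.Walk.cons_isCycle_iff P (hadj 0 (by omega))).mpr
      ⟨Walk.IsPath.mk' hnodup, hne⟩
  · intro a
    rw [hw, Walk.support_cons, List.tail_cons]
    apply List.count_eq_one_of_mem hnodup
    obtain ⟨j, hj1, hj2, hj3⟩ := f_surj k i hk hi a
    rw [hsupp]
    exact List.mem_map.mpr ⟨j, List.mem_range'_1.mpr ⟨hj1, by omega⟩, hj3⟩

end HamDecomp

open HamDecomp in
/-- The complete graph `K_{2k+1}` on `2k+1` vertices can be decomposed into `k`
edge-disjoint Hamiltonian cycles: there are `k` subgraphs, each the edge set of a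
Hamiltonian cycle, such that every edge of `K_{2k+1}` lies in exactly one of them. -/
theorem complete_graph_hamiltonian_decomposition (k : ℕ) :
    ∃ C : Fin k → SimpleGraph (Fin (2 * k + 1)),
      (∀ i, ∃ (v : Fin (2 * k + 1)) (w : (C i).Walk v v), w.IsHamiltonianCycle) ∧
      (∀ e : Sym2 (Fin (2 * k + 1)),
        e ∈ (⊤ : SimpleGraph (Fin (2 * k + 1))).edgeSet ↔ ∃! i, e ∈ (C i).edgeSet) := by
  rcases Nat.eq_zero_or_pos k with hk | hk
  · subst hk
    refine ⟨fun i => i.elim0, fun i => i.elim0, fun e => ?_⟩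
    induction e using Sym2.ind with
    | _ a b =>
      rw [SimpleGraph.mem_edgeSet, SimpleGraph.top_adj]
      constructor
      · intro he
        have hab : a.val = b.val := by have := a.isLt; have := b.isLt; omega
        exact absurd (Fin.ext hab) he
      · rintro ⟨i, -, -⟩
        exact i.elim0
  · refine ⟨fun i => Cg k i.val i.isLt, fun i => hamCycle k hk i.val i.isLt, fun e => ?_⟩
    induction e using Sym2.ind with
    | _ a b =>
      rw [SimpleGraph.mem_edgeSet, SimpleGraph.top_adj]
      constructor
      · intro hab
        have hne : a.val ≠ b.val := fun h => hab (Fin.ext h)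
        have ha := a.isLt
        have hb := b.isLt
        have main : ∃ i0, i0 < k ∧ A k i0 a b ∧ ∀ i', i' < k → A k i' a b → i' = i0 := by
          by_cases hA : a.val = 2*k
          · refine ⟨if b.val < k then b.val else b.val - k, by split_ifs <;> omega, ?_, ?_⟩
            · unfold A; split_ifs <;> omega
            · intro i' hlt h'; unfold A at h'; split_ifs <;> omega
          by_cases hB : b.val = 2*k
          · refine ⟨if a.val < k then a.val else a.val - k, by split_ifs <;> omega, ?_, ?_⟩
            · unfold A; split_ifs <;> omega
            · intro i' hlt h'; unfold A at h'; split_ifs <;> omega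
          · refine ⟨(if a.val + b.val < 2*k then a.val + b.val else a.val + b.val - 2*k)/2,
              by split_ifs <;> omega, ?_, ?_⟩
            · unfold A; split_ifs <;> omega
            · intro i' hlt h'; unfold A at h'; split_ifs <;> omega
        obtain ⟨i0, hi0lt, hA0, huniq⟩ := main
        refine ⟨⟨i0, hi0lt⟩, ?_, ?_⟩
        · simp only [SimpleGraph.mem_edgeSet]
          exact hA0
        · rintro i' hi'
          simp only [SimpleGraph.mem_edgeSet] at hi'
          exact Fin.ext (huniq i'.val i'.isLt hi')
      · rintro ⟨i, hi, -⟩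
        simp only [SimpleGraph.mem_edgeSet] at hi
        exact (Cg k i.val i.isLt).ne_of_adj hi
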